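/- Let μ be a measure on a measurable space Ω and let f, f' : Ω → ℝ be measurable functions with f(ω) ≥ f'(ω) for every ω ∈ Ω. Then (1/8)·∫_Ω (f − f')² e^{f'} dμ ≤ (1/2)·∫_Ω (e^{f/2} − e^{f'/2})² dμ. -/

import Mathlib

open MeasureTheory
open scoped ENNReal

/-- Lemma A.1 of the supplementary material: for measurable `f ≥ f'`,
`(1/8) ∫ (f - f')² e^{f'} dμ ≤ (1/2) ∫ (e^{f/2} - e^{f'/2})² dμ`. -/
theorem stmt_2 {Ω : Type*} [MeasurableSpace Ω] (μ : Measure Ω)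
    (f f' : Ω → ℝ) (hf : Measurable f) (hf' : Measurable f')
    (hle : ∀ ω, f' ω ≤ f ω) :
    (1 / 8 : ℝ≥0∞) * ∫⁻ ω, ENNReal.ofReal ((f ω - f' ω) ^ 2 * Real.exp (f' ω)) ∂μ ≤
      (1 / 2 : ℝ≥0∞) * ∫⁻ ω, ENNReal.ofReal ((Real.exp (f ω / 2) - Real.exp (f' ω / 2)) ^ 2) ∂μ := by
  have key : ∀ ω, (1/4 : ℝ) * ((f ω - f' ω) ^ 2 * Real.exp (f' ω)) ≤
      (Real.exp (f ω / 2) - Real.exp (f' ω / 2)) ^ 2 := by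
    intro ω
    set t : ℝ := (f ω - f' ω) / 2 with ht
    have htnn : 0 ≤ t := by
      have := hle ω; simp [ht]; linarith
    have hexp : Real.exp (f ω / 2) = Real.exp t * Real.exp (f' ω / 2) := by
      rw [← Real.exp_add, ht]; ring_nf
    have h1 : Real.exp (f ω / 2) - Real.exp (f' ω / 2)
        = (Real.exp t - 1) * Real.exp (f' ω / 2) := by rw [hexp]; ring
    have h2 : t ≤ Real.exp t - 1 := by linarith [Real.add_one_le_exp t]
    have h3 : t ^ 2 ≤ (Real.exp t - 1) ^ 2 := by
      apply pow_le_pow_left₀ htnn h2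
    have h4 : (1/4 : ℝ) * ((f ω - f' ω) ^ 2 * Real.exp (f' ω))
        = t ^ 2 * (Real.exp (f' ω / 2)) ^ 2 := by
      have hsq : (Real.exp (f' ω / 2)) ^ 2 = Real.exp (f' ω) := by
        rw [sq, ← Real.exp_add]; ring_nf
      rw [hsq, ht]; ring
    rw [h1, mul_pow, h4]
    have : (0:ℝ) ≤ (Real.exp (f' ω / 2)) ^ 2 := sq_nonneg _
    nlinarith [h3, this]
  calc (1 / 8 : ℝ≥0∞) * ∫⁻ ω, ENNReal.ofReal ((f ω - f' ω) ^ 2 * Real.exp (f' ω)) ∂μ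
      = (1/2 : ℝ≥0∞) * ∫⁻ ω, ENNReal.ofReal ((1/4 : ℝ)) * ENNReal.ofReal ((f ω - f' ω) ^ 2 * Real.exp (f' ω)) ∂μ := by
        rw [lintegral_const_mul _ ((by fun_prop : Measurable fun ω => (f ω - f' ω) ^ 2 * Real.exp (f' ω)).ennreal_ofReal)]
        rw [← mul_assoc]
        congr 1
        rw [show ENNReal.ofReal ((1/4:ℝ)) = (1/4 : ℝ≥0∞) by
          rw [ENNReal.ofReal_div_of_pos (by norm_num)]; simp]
        rw [show (1/8 : ℝ≥0∞) = (1/2) * (1/4) by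
          simp [one_div, ← ENNReal.mul_inv]; norm_num]
    _ ≤ (1 / 2 : ℝ≥0∞) * ∫⁻ ω, ENNReal.ofReal ((Real.exp (f ω / 2) - Real.exp (f' ω / 2)) ^ 2) ∂μ := by
        refine mul_le_mul_right ?_ _
        apply lintegral_mono
        intro ω
        dsimp only
        rw [← ENNReal.ofReal_mul (by norm_num)]
        exact ENNReal.ofReal_le_ofReal (key ω)
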